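/- Let R be a commutative unital ring and let α, a, b ∈ R. Then the following two systems of conditions are equivalent: (1) a = a⁴, b = αb⁴, ab² = 0, a²b = 0, and a³ − αb³ is a unit of R; (2) ab = 0 and a³ + αb³ = 1. Moreover, if (2) holds then (a³ − αb³)² = 1. -/

import Mathlib

/-- Let `R` be a commutative unital ring and `α, a, b ∈ R`.  The
conditions `a = a⁴`, `b = αb⁴`, `ab² = 0`, `a²b = 0` and `a³ − αb³ ∈ R^×` hold if and
only if `ab = 0` and `a³ + αb³ = 1`.  Moreover, in that case `(a³ − αb³)² = 1`. -/
theorem stmt13 (R : Type*) [CommRing R] (α a b : R) :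
    ((a = a ^ 4 ∧ b = α * b ^ 4 ∧ a * b ^ 2 = 0 ∧ a ^ 2 * b = 0 ∧
        IsUnit (a ^ 3 - α * b ^ 3)) ↔
      (a * b = 0 ∧ a ^ 3 + α * b ^ 3 = 1)) ∧
    ((a * b = 0 ∧ a ^ 3 + α * b ^ 3 = 1) → (a ^ 3 - α * b ^ 3) ^ 2 = 1) := by
  constructor
  · constructor
    · rintro ⟨h1, h2, h3, h4, hu⟩
      have h33 : a ^ 3 * b ^ 3 = 0 := by linear_combination a * b ^ 2 * h4
      have ha6 : a ^ 6 = a ^ 3 := by linear_combination (-(a ^ 2)) * h1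
      have hb6 : α ^ 2 * b ^ 6 = α * b ^ 3 := by linear_combination (-(α * b ^ 2)) * h2
      have hab : a * b = 0 := by
        calc a * b = a ^ 4 * (α * b ^ 4) := by conv_lhs => rw [h1, h2]
          _ = α * (a ^ 2 * b) * (a ^ 2 * b ^ 3) := by ring
          _ = 0 := by rw [h4]; ring
      have ht3 : (a ^ 3 - α * b ^ 3) ^ 2 * (a ^ 3 - α * b ^ 3) =
          1 * (a ^ 3 - α * b ^ 3) := by
        linear_combination (a ^ 3 + 1) * ha6 - 3 * α * a ^ 3 * h33 +
          3 * α ^ 2 * b ^ 3 * h33 + (-(α * b ^ 3) - 1) * hb6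
      have h2sq : (a ^ 3 - α * b ^ 3) ^ 2 = 1 := hu.mul_right_cancel ht3
      refine ⟨hab, ?_⟩
      linear_combination h2sq - ha6 + 2 * α * h33 - hb6
    · rintro ⟨hab, hs⟩
      have h33 : a ^ 3 * b ^ 3 = 0 := by linear_combination a ^ 2 * b ^ 2 * hab
      refine ⟨by linear_combination (-a) * hs + α * b ^ 2 * hab,
        by linear_combination (-b) * hs + a ^ 2 * hab,
        by linear_combination b * hab,
        by linear_combination a * hab,
        IsUnit.of_mul_eq_one (a ^ 3 - α * b ^ 3) ?_⟩
      linear_combination (a ^ 3 + α * b ^ 3 + 1) * hs - 4 * α * h33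
  · rintro ⟨hab, hs⟩
    have h33 : a ^ 3 * b ^ 3 = 0 := by linear_combination a ^ 2 * b ^ 2 * hab
    linear_combination (a ^ 3 + α * b ^ 3 + 1) * hs - 4 * α * h33
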